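/- Let r and n be positive integers, let O be any positive-dominant total order on C(r,n), and let η ∈ G(r,n). Then, as an identity of formal power series in two variables t and q with integer coefficients, (Σ_{f ∈ N_0^{r,n} : γ_O(f) = η} t^{max(f)} q^{n·max(f) − |f|}) · ∏_{i=0}^{n−1} (1 − t q^i) = t^{des_O(η)} q^{maj_O(η)}. (The left-hand sum is a well-defined formal power series: for each pair (M,s) there are only finitely many f with γ_O(f) = η, max(f) = M and n·M − |f| = s.) -/

import Mathlib

open scoped Classical

abbrev CI : Type := ℕ × ℕ

/-- Membership in the set `C(r,n)` of colored integers. -/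
def memC (r n : ℕ) (x : CI) : Prop :=
  x.1 ≤ n ∧ x.2 < r ∧ (x.1 = 0 → x.2 = 0)

/-- A positive-dominant (strict) total order on the colored integers `C(r,n)`. -/
structure PDOrder (r n : ℕ) where
  lt : CI → CI → Prop
  irrefl : ∀ x, memC r n x → ¬lt x x
  trans : ∀ x y z, memC r n x → memC r n y → memC r n z → lt x y → lt y z → lt x z
  trichotomy : ∀ x y, memC r n x → memC r n y → x = y ∨ lt x y ∨ lt y x
  nat_mono : ∀ i j : ℕ, i ≤ n → j ≤ n → i < j → lt (i, 0) (j, 0)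
  pos_dom : ∀ i j c : ℕ, i ≤ n → 1 ≤ j → j ≤ n → 1 ≤ c → c < r → lt (j, c) (i, 0)

/-- A colored permutation in `G(r,n) = Z_r ≀ S_n`. -/
structure ColoredPerm (r n : ℕ) where
  perm : Equiv.Perm (Fin n)
  color : Fin n → Fin r

/-- The colored entry `π(i)^{c_i}` (values are taken in `[1,n]`). -/
def cval {r n : ℕ} (γ : ColoredPerm r n) (i : Fin n) : CI :=
  ((γ.perm i : ℕ) + 1, (γ.color i : ℕ))

/-- Entry `γ(j)` for `j ∈ {0,…,n}`, with the convention `γ(0) = 0`. -/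
def centry {r n : ℕ} (γ : ColoredPerm r n) (j : ℕ) : CI :=
  if h : 1 ≤ j ∧ j ≤ n then cval γ ⟨j - 1, by omega⟩ else (0, 0)

/-- Descent set `Des(γ) ⊆ {0,…,n-1}` with respect to the relation `lt`. -/
noncomputable def DesSet {r n : ℕ} (lt : CI → CI → Prop) (γ : ColoredPerm r n) : Finset ℕ :=
  (Finset.range n).filter fun j => lt (centry γ (j + 1)) (centry γ j)

noncomputable def desStat {r n : ℕ} (lt : CI → CI → Prop) (γ : ColoredPerm r n) : ℕ :=
  (DesSet lt γ).card

noncomputable def majStat {r n : ℕ} (lt : CI → CI → Prop) (γ : ColoredPerm r n) : ℕ :=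
  ∑ j ∈ DesSet lt γ, j

noncomputable def invStat {r n : ℕ} (lt : CI → CI → Prop) (γ : ColoredPerm r n) : ℕ :=
  ((Finset.univ : Finset (Fin n × Fin n)).filter fun p =>
    p.1 < p.2 ∧ lt (cval γ p.2) (cval γ p.1)).card

noncomputable def lenStat {r n : ℕ} (lt : CI → CI → Prop) (γ : ColoredPerm r n) : ℕ :=
  invStat lt γ +
    ∑ i ∈ Finset.univ.filter (fun i => 0 < (γ.color i : ℕ)),
      ((γ.perm i : ℕ) + 1 + (γ.color i : ℕ) - 1)

def colStat {r n : ℕ} (γ : ColoredPerm r n) : ℕ := ∑ i, (γ.color i : ℕ)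

/-- The inverse colored permutation `γ⁻¹`. -/
def cinv {r n : ℕ} (γ : ColoredPerm r n) : ColoredPerm r n :=
  ⟨γ.perm⁻¹, fun i => γ.color (γ.perm⁻¹ i)⟩

/-- An element of `N_0^{r,n}`: a sequence of colored nonnegative integers. -/
structure ColoredSeq (r n : ℕ) where
  val : Fin n → ℕ
  col : Fin n → ℕ
  col_lt : ∀ i, col i < r
  zero_col : ∀ i, val i = 0 → col i = 0

/-- `γ` is the colored permutation `γ_O(f)` obtained by sorting the colored positions
`i^{cf_i}` by increasing value `f_i`, ties broken by increasing `lt`-order. -/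
def isSorted {r n : ℕ} (lt : CI → CI → Prop) (f : ColoredSeq r n) (γ : ColoredPerm r n) : Prop :=
  (∀ i, (γ.color i : ℕ) = f.col (γ.perm i)) ∧
    ∀ i j : Fin n, i < j →
      f.val (γ.perm i) < f.val (γ.perm j) ∨
        (f.val (γ.perm i) = f.val (γ.perm j) ∧ lt (cval γ i) (cval γ j))

def maxf {r n : ℕ} (f : ColoredSeq r n) : ℕ := Finset.univ.sup f.val
def sumf {r n : ℕ} (f : ColoredSeq r n) : ℕ := ∑ i, f.val i
def colf {r n : ℕ} (f : ColoredSeq r n) : ℕ := ∑ i, f.col i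

-- Statement 2
noncomputable def lhs2 (r n : ℕ) (O : PDOrder r n) (η : ColoredPerm r n) :
    MvPowerSeries (Fin 2) ℤ :=
  fun d => (Nat.card {f : ColoredSeq r n // isSorted O.lt f η ∧
    maxf f = d 0 ∧ n * maxf f - sumf f = d 1} : ℤ)

namespace Stmt2Aux

open Finset MvPowerSeries

variable {r n : ℕ}

lemma memC_cval (η : ColoredPerm r n) (i : Fin n) : memC r n (cval η i) :=
  ⟨Nat.succ_le_of_lt (η.perm i).isLt, (η.color i).isLt, by simp [cval]⟩

lemma memC_zero (hr : 0 < r) : memC r n ((0, 0) : CI) :=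
  ⟨Nat.zero_le _, hr, fun _ => rfl⟩

lemma lt_asymm' (O : PDOrder r n) {x y : CI} (hx : memC r n x) (hy : memC r n y)
    (h : O.lt x y) : ¬ O.lt y x :=
  fun h' => O.irrefl x hx (O.trans x y x hx hy hx h h')

lemma centry_zero (η : ColoredPerm r n) : centry η 0 = ((0, 0) : CI) := by
  simp [centry]

lemma centry_succ (η : ColoredPerm r n) (j : Fin n) :
    centry η (j.val + 1) = cval η j := by
  have h : 1 ≤ j.val + 1 ∧ j.val + 1 ≤ n := ⟨by omega, j.isLt⟩
  rw [centry, dif_pos h]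
  exact congrArg (cval η) (Fin.ext (by simp))

lemma memC_centry (hr : 0 < r) (η : ColoredPerm r n) {j : ℕ} (_ : j ≤ n) :
    memC r n (centry η j) := by
  rw [centry]
  split
  · exact memC_cval η _
  · exact memC_zero hr

lemma mem_DesSet {η : ColoredPerm r n} {lt : CI → CI → Prop} {j : ℕ} :
    j ∈ DesSet lt η ↔ j < n ∧ lt (centry η (j + 1)) (centry η j) := by
  simp [DesSet]

lemma centry_ne (η : ColoredPerm r n) {j : ℕ} (hj : j < n) :
    centry η j ≠ centry η (j + 1) := by
  intro hEq
  rw [show j + 1 = ((⟨j, hj⟩ : Fin n) : ℕ) + 1 from rfl, centry_succ] at hEq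
  rcases Nat.eq_zero_or_pos j with h0 | h1
  · subst h0
    rw [centry_zero] at hEq
    have := congrArg Prod.fst hEq
    simp [cval] at this
  · have hj' : 1 ≤ j ∧ j ≤ n := ⟨h1, le_of_lt hj⟩
    rw [centry, dif_pos hj'] at hEq
    have h2 := congrArg Prod.fst hEq
    simp only [cval, Nat.add_right_cancel_iff] at h2
    have h3 : (⟨j - 1, by omega⟩ : Fin n) = ⟨j, hj⟩ :=
      η.perm.injective (Fin.val_injective h2)
    have := congrArg Fin.val h3
    simp at this
    omega

lemma not_des (hr : 0 < r) (O : PDOrder r n) (η : ColoredPerm r n) {j : ℕ}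
    (hj : j < n) (h : j ∉ DesSet O.lt η) :
    O.lt (centry η j) (centry η (j + 1)) := by
  have hm1 := memC_centry hr η (le_of_lt hj)
  have hm2 := memC_centry hr η (show j + 1 ≤ n by omega)
  rcases O.trichotomy _ _ hm1 hm2 with hEq | hlt | hlt
  · exact absurd hEq (centry_ne η hj)
  · exact hlt
  · exact absurd (mem_DesSet.mpr ⟨hj, hlt⟩) h

lemma chain (hr : 0 < r) (O : PDOrder r n) (η : ColoredPerm r n) :
    ∀ {b a : ℕ}, a < b → b ≤ n →
    (∀ p, a ≤ p → p < b → p ∉ DesSet O.lt η) →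
    O.lt (centry η a) (centry η b) := by
  intro b
  induction b with
  | zero => omega
  | succ b ih =>
    intro a hab hb hnd
    rcases Nat.lt_or_ge a b with h | h
    · have h1 := ih h (by omega) (fun p hp1 hp2 => hnd p hp1 (by omega))
      have h2 := not_des hr O η (show b < n by omega) (hnd b (by omega) (by omega))
      exact O.trans _ _ _ (memC_centry hr η (by omega)) (memC_centry hr η (by omega))
        (memC_centry hr η (by omega)) h1 h2
    · have ha : a = b := by omega
      subst ha
      exact not_des hr O η (by omega) (hnd a (le_refl _) (by omega))

end Stmt2Aux
namespace Stmt2Aux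

variable {r n : ℕ}

/-- Indicator of a descent at position `j`. -/
noncomputable def eD (O : PDOrder r n) (η : ColoredPerm r n) (j : ℕ) : ℕ :=
  if j ∈ DesSet O.lt η then 1 else 0

noncomputable def Dn (O : PDOrder r n) (η : ColoredPerm r n) (d : Fin n → ℕ) (j : ℕ) : ℕ :=
  if h : j < n then d ⟨j, h⟩ + eD O η j else 0

noncomputable def Mn (O : PDOrder r n) (η : ColoredPerm r n) (d : Fin n → ℕ) (k : ℕ) : ℕ :=
  ∑ j ∈ Finset.range (k + 1), Dn O η d j

lemma Mn_mono (O : PDOrder r n) (η : ColoredPerm r n) (d : Fin n → ℕ) {k k' : ℕ}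
    (h : k ≤ k') : Mn O η d k ≤ Mn O η d k' :=
  Finset.sum_le_sum_of_subset (Finset.range_subset_range.mpr (by omega))

lemma eD_zero_of_Dn (O : PDOrder r n) (η : ColoredPerm r n) {d : Fin n → ℕ} {j : ℕ}
    (hj : j < n) (h : Dn O η d j = 0) : j ∉ DesSet O.lt η := by
  rw [Dn, dif_pos hj] at h
  intro hmem
  rw [eD, if_pos hmem] at h
  omega

lemma Mn_zero_forall (O : PDOrder r n) (η : ColoredPerm r n) {d : Fin n → ℕ} {k : ℕ}
    (h : Mn O η d k = 0) {j : ℕ} (hj : j ≤ k) : Dn O η d j = 0 := by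
  rw [Mn, Finset.sum_eq_zero_iff] at h
  exact h j (Finset.mem_range.mpr (by omega))

/-- The colored sequence associated to `d : Fin n → ℕ`. -/
noncomputable def toSeq (hr : 0 < r) (O : PDOrder r n) (η : ColoredPerm r n)
    (d : Fin n → ℕ) : ColoredSeq r n where
  val i := Mn O η d (η.perm⁻¹ i : Fin n).val
  col i := (η.color (η.perm⁻¹ i) : ℕ)
  col_lt i := (η.color _).isLt
  zero_col i h := by
    have h' : Mn O η d (η.perm⁻¹ i : Fin n).val = 0 := h
    show (η.color (η.perm⁻¹ i) : ℕ) = 0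
    by_contra hc
    set k : Fin n := η.perm⁻¹ i with hk
    have hchain : O.lt (centry η 0) (centry η (k.val + 1)) := by
      refine chain hr O η (by omega) k.isLt ?_
      intro p hp1 hp2
      exact eD_zero_of_Dn O η (by omega) (Mn_zero_forall O η h' (by omega))
    rw [centry_zero, centry_succ] at hchain
    have hpd : O.lt (cval η k) ((0, 0) : CI) :=
      O.pos_dom 0 ((η.perm k : ℕ) + 1) (η.color k : ℕ) (Nat.zero_le _)
        (by omega) (Nat.succ_le_of_lt (η.perm k).isLt) (by omega) (η.color k).isLt
    exact lt_asymm' O (memC_zero hr) (memC_cval η k) hchain hpd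

lemma toSeq_val (hr : 0 < r) (O : PDOrder r n) (η : ColoredPerm r n) (d : Fin n → ℕ)
    (k : Fin n) : (toSeq hr O η d).val (η.perm k) = Mn O η d k.val := by
  simp [toSeq]

lemma toSeq_sorted (hr : 0 < r) (O : PDOrder r n) (η : ColoredPerm r n) (d : Fin n → ℕ) :
    isSorted O.lt (toSeq hr O η d) η := by
  constructor
  · intro i
    simp [toSeq]
  · intro i j hij
    rw [toSeq_val, toSeq_val]
    have hle : Mn O η d i.val ≤ Mn O η d j.val := Mn_mono O η d (by omega)
    rcases lt_or_eq_of_le hle with h | h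
    · exact Or.inl h
    · refine Or.inr ⟨h, ?_⟩
      have hzero : ∑ p ∈ Finset.Ico (i.val + 1) (j.val + 1), Dn O η d p = 0 := by
        have hcons := Finset.sum_Ico_consecutive (Dn O η d)
          (show 0 ≤ i.val + 1 by omega) (show i.val + 1 ≤ j.val + 1 by omega)
        simp only [Mn, Finset.range_eq_Ico] at h
        omega
      have hnd : ∀ p, i.val + 1 ≤ p → p < j.val + 1 → p ∉ DesSet O.lt η := by
        intro p hp1 hp2
        have hz' : Dn O η d p = 0 := by
          rw [Finset.sum_eq_zero_iff] at hzero
          exact hzero p (Finset.mem_Ico.mpr ⟨hp1, hp2⟩)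
        exact eD_zero_of_Dn O η (by omega) hz'
      have := chain hr O η (show i.val + 1 < j.val + 1 by omega) (by omega) hnd
      rwa [centry_succ, centry_succ] at this

end Stmt2Aux
namespace Stmt2Aux

variable {r n : ℕ}

lemma DesSet_subset (O : PDOrder r n) (η : ColoredPerm r n) :
    DesSet O.lt η ⊆ Finset.range n := Finset.filter_subset _ _

lemma desStat_eq (O : PDOrder r n) (η : ColoredPerm r n) :
    desStat O.lt η = ∑ j ∈ Finset.range n, eD O η j := by
  unfold desStat eD
  rw [Finset.sum_ite_mem, Finset.inter_eq_right.mpr (DesSet_subset O η)]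
  rw [Finset.card_eq_sum_ones]

lemma majStat_eq (O : PDOrder r n) (η : ColoredPerm r n) :
    majStat O.lt η = ∑ j ∈ Finset.range n, j * eD O η j := by
  unfold majStat eD
  have : ∀ j : ℕ, j * (if j ∈ DesSet O.lt η then 1 else 0) =
      (if j ∈ DesSet O.lt η then j else 0) := by
    intro j; split <;> omega
  simp_rw [this]
  rw [Finset.sum_ite_mem, Finset.inter_eq_right.mpr (DesSet_subset O η)]

lemma Dn_val (O : PDOrder r n) (η : ColoredPerm r n) (d : Fin n → ℕ) (p : Fin n) :
    Dn O η d p.val = d p + eD O η p.val := by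
  rw [Dn, dif_pos p.isLt]

lemma Mn_last (hn : 0 < n) (O : PDOrder r n) (η : ColoredPerm r n) (d : Fin n → ℕ) :
    Mn O η d (n - 1) = (∑ p, d p) + desStat O.lt η := by
  rw [Mn, show n - 1 + 1 = n by omega, ← Fin.sum_univ_eq_sum_range (Dn O η d) n]
  simp_rw [Dn_val O η d]
  rw [Finset.sum_add_distrib, desStat_eq O η,
    ← Fin.sum_univ_eq_sum_range (eD O η) n]

lemma maxf_toSeq (hr : 0 < r) (hn : 0 < n) (O : PDOrder r n) (η : ColoredPerm r n)
    (d : Fin n → ℕ) : maxf (toSeq hr O η d) = (∑ p, d p) + desStat O.lt η := by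
  rw [← Mn_last hn O η d]
  unfold maxf
  apply le_antisymm
  · apply Finset.sup_le
    intro i _
    show Mn O η d (η.perm⁻¹ i : Fin n).val ≤ _
    exact Mn_mono O η d (by have := (η.perm⁻¹ i).isLt; omega)
  · have h := Finset.le_sup (f := (toSeq hr O η d).val)
      (Finset.mem_univ (η.perm ⟨n - 1, by omega⟩))
    rwa [toSeq_val] at h

lemma sumf_toSeq (hr : 0 < r) (O : PDOrder r n) (η : ColoredPerm r n)
    (d : Fin n → ℕ) : sumf (toSeq hr O η d) = ∑ k : Fin n, Mn O η d k.val := by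
  unfold sumf
  rw [← Equiv.sum_comp η.perm (fun i => (toSeq hr O η d).val i)]
  exact Finset.sum_congr rfl fun k _ => by rw [toSeq_val]

lemma stat2_toSeq (hr : 0 < r) (hn : 0 < n) (O : PDOrder r n) (η : ColoredPerm r n)
    (d : Fin n → ℕ) :
    n * maxf (toSeq hr O η d) - sumf (toSeq hr O η d) =
      (∑ p : Fin n, (p : ℕ) * d p) + majStat O.lt η := by
  have hM : ∀ k : Fin n, Mn O η d (n - 1) =
      Mn O η d k.val + ∑ j ∈ Finset.Ico (k.val + 1) n, Dn O η d j := by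
    intro k
    have h1 : Mn O η d (n - 1) = ∑ j ∈ Finset.Ico 0 n, Dn O η d j := by
      rw [Mn, show n - 1 + 1 = n by omega, Finset.range_eq_Ico]
    have h2 : Mn O η d k.val = ∑ j ∈ Finset.Ico 0 (k.val + 1), Dn O η d j := by
      rw [Mn, Finset.range_eq_Ico]
    rw [h1, h2]
    exact (Finset.sum_Ico_consecutive (Dn O η d) (Nat.zero_le _)
      (by have := k.isLt; omega : k.val + 1 ≤ n)).symm
  have hmax : maxf (toSeq hr O η d) = Mn O η d (n - 1) := by
    rw [maxf_toSeq hr hn O η d, Mn_last hn O η d]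
  rw [hmax, sumf_toSeq hr O η d]
  have hn1 : n * Mn O η d (n - 1) = ∑ _k : Fin n, Mn O η d (n - 1) := by
    rw [Finset.sum_const, Finset.card_univ, Fintype.card_fin, smul_eq_mul]
  rw [hn1]
  have hsub : ∑ k : Fin n, (Mn O η d (n - 1) - Mn O η d k.val) =
      (∑ _k : Fin n, Mn O η d (n - 1)) - ∑ k : Fin n, Mn O η d k.val :=
    Finset.sum_tsub_distrib Finset.univ (fun k _ => by rw [hM k]; omega)
  rw [← hsub]
  have hterm : ∀ k : Fin n, Mn O η d (n - 1) - Mn O η d k.val =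
      ∑ j ∈ Finset.Ico (k.val + 1) n, Dn O η d j := fun k => by rw [hM k]; omega
  simp_rw [hterm]
  have hfilter : ∀ k : Fin n, Finset.Ico (k.val + 1) n =
      (Finset.range n).filter (fun j => k.val < j) := by
    intro k
    ext j
    simp only [Finset.mem_Ico, Finset.mem_filter, Finset.mem_range]
    omega
  have step1 : ∀ k : Fin n, ∑ j ∈ Finset.Ico (k.val + 1) n, Dn O η d j =
      ∑ j ∈ Finset.range n, if k.val < j then Dn O η d j else 0 := by
    intro k
    rw [hfilter k, Finset.sum_filter]
  simp_rw [step1]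
  rw [Fin.sum_univ_eq_sum_range
    (fun k => ∑ j ∈ Finset.range n, if k < j then Dn O η d j else 0) n]
  rw [Finset.sum_comm]
  have step2 : ∀ j ∈ Finset.range n,
      (∑ k ∈ Finset.range n, if k < j then Dn O η d j else 0) = j * Dn O η d j := by
    intro j hj
    rw [Finset.sum_ite, Finset.sum_const_zero, add_zero, Finset.sum_const, smul_eq_mul]
    congr 1
    have : (Finset.range n).filter (fun k => k < j) = Finset.range j := by
      ext k
      simp only [Finset.mem_filter, Finset.mem_range]
      have hj' := Finset.mem_range.mp hj
      omega
    rw [this, Finset.card_range]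
  rw [Finset.sum_congr rfl step2,
    ← Fin.sum_univ_eq_sum_range (fun j => j * Dn O η d j) n]
  have step3 : ∀ p : Fin n, (p : ℕ) * Dn O η d p.val =
      (p : ℕ) * d p + (p : ℕ) * eD O η p.val := by
    intro p
    rw [Dn_val, Nat.mul_add]
  simp_rw [step3]
  rw [Finset.sum_add_distrib, majStat_eq O η,
    ← Fin.sum_univ_eq_sum_range (fun j => j * eD O η j) n]

end Stmt2Aux
namespace Stmt2Aux

variable {r n : ℕ}

/-- `M` values of a colored sequence along `η`. -/
def Mf (η : ColoredPerm r n) (f : ColoredSeq r n) (k : Fin n) : ℕ := f.val (η.perm k)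

/-- previous `M` value (0 for the first position). -/
def Mprev (η : ColoredPerm r n) (f : ColoredSeq r n) (k : Fin n) : ℕ :=
  if _ : k.val = 0 then 0 else Mf η f ⟨k.val - 1, by omega⟩

noncomputable def dOf (O : PDOrder r n) (η : ColoredPerm r n) (f : ColoredSeq r n)
    (k : Fin n) : ℕ :=
  Mf η f k - Mprev η f k - eD O η k.val

lemma step_le (hr : 0 < r) (O : PDOrder r n) (η : ColoredPerm r n) {f : ColoredSeq r n}
    (hs : isSorted O.lt f η) (k : Fin n) :
    Mprev η f k + eD O η k.val ≤ Mf η f k := by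
  rcases Nat.eq_zero_or_pos k.val with h0 | h1
  · have hn0 : 0 < n := Nat.lt_of_le_of_lt (Nat.zero_le _) k.isLt
    have hk0 : k = ⟨0, hn0⟩ := Fin.ext h0
    rw [hk0, Mprev, dif_pos rfl, zero_add, eD]
    split
    · rename_i hdes
      rw [mem_DesSet] at hdes
      obtain ⟨-, hdes⟩ := hdes
      rw [centry_succ η ⟨0, hn0⟩,
        show ((⟨0, hn0⟩ : Fin n) : ℕ) = 0 from rfl, centry_zero] at hdes
      have hcol : (η.color ⟨0, hn0⟩ : ℕ) ≠ 0 := by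
        intro hc
        have hmono : O.lt ((0, 0) : CI) (cval η ⟨0, hn0⟩) := by
          have := O.nat_mono 0 ((η.perm ⟨0, hn0⟩ : ℕ) + 1) (Nat.zero_le _)
            (Nat.succ_le_of_lt (η.perm ⟨0, hn0⟩).isLt) (by omega)
          rwa [show ((((η.perm ⟨0, hn0⟩ : ℕ) + 1), 0) : CI) =
            cval η ⟨0, hn0⟩ by rw [cval, hc]] at this
        exact lt_asymm' O (memC_zero hr) (memC_cval η _) hmono hdes
      have hcol2 : f.col (η.perm ⟨0, hn0⟩) ≠ 0 := by
        rw [← hs.1 ⟨0, hn0⟩]; exact hcol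
      have hval : f.val (η.perm ⟨0, hn0⟩) ≠ 0 :=
        fun hv => hcol2 (f.zero_col _ hv)
      have hMf : Mf η f ⟨0, hn0⟩ = f.val (η.perm ⟨0, hn0⟩) := rfl
      omega
    · omega
  · have hk1 : k.val - 1 < n := by have := k.isLt; omega
    have hkk' : (⟨k.val - 1, hk1⟩ : Fin n) < k := by
      rw [Fin.lt_def, Fin.val_mk]; omega
    have hsort := hs.2 ⟨k.val - 1, hk1⟩ k hkk'
    have hb : Mprev η f k = f.val (η.perm ⟨k.val - 1, hk1⟩) := by
      rw [Mprev, dif_neg (by omega)]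
      rfl
    have hc : Mf η f k = f.val (η.perm k) := rfl
    rw [hb, hc, eD]
    split
    · rename_i hdes
      rw [mem_DesSet] at hdes
      obtain ⟨-, hdes⟩ := hdes
      have e1 : centry η (k.val + 1) = cval η k := centry_succ η k
      have e2 : centry η k.val = cval η (⟨k.val - 1, hk1⟩ : Fin n) := by
        have h3 := centry_succ η (⟨k.val - 1, hk1⟩ : Fin n)
        rw [show ((⟨k.val - 1, hk1⟩ : Fin n) : ℕ) + 1 = k.val from by
          rw [Fin.val_mk]; omega] at h3
        exact h3
      rw [e1, e2] at hdes
      rcases hsort with h | h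
      · omega
      · exact absurd h.2 (lt_asymm' O (memC_cval η k) (memC_cval η _) hdes)
    · rcases hsort with h | h
      · omega
      · omega

lemma Mn_dOf (hr : 0 < r) (O : PDOrder r n) (η : ColoredPerm r n) {f : ColoredSeq r n}
    (hs : isSorted O.lt f η) (k : Fin n) :
    Mn O η (dOf O η f) k.val = Mf η f k := by
  obtain ⟨m, hm⟩ := k
  induction m with
  | zero =>
    have hstep := step_le hr O η hs ⟨0, hm⟩
    rw [Mprev, dif_pos rfl] at hstep
    rw [Fin.val_mk, Mn, Finset.sum_range_one, Dn, dif_pos hm, dOf, Mprev, dif_pos rfl]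
    simp only [Fin.val_mk] at hstep ⊢
    omega
  | succ m ih =>
    have hm' : m < n := by omega
    have hstep := step_le hr O η hs ⟨m + 1, hm⟩
    rw [Mprev, dif_neg (by rw [Fin.val_mk]; omega)] at hstep
    simp only [Fin.val_mk, Nat.add_sub_cancel] at hstep
    have hih := ih hm'
    rw [Fin.val_mk] at hih ⊢
    have hsucc : Mn O η (dOf O η f) (m + 1) =
        Mn O η (dOf O η f) m + Dn O η (dOf O η f) (m + 1) :=
      Finset.sum_range_succ (Dn O η (dOf O η f)) (m + 1)
    rw [hsucc, hih, Dn, dif_pos hm, dOf, Mprev, dif_neg (by rw [Fin.val_mk]; omega)]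
    simp only [Fin.val_mk, Nat.add_sub_cancel]
    have h1 : Mf η f ⟨m, by omega⟩ = Mf η f ⟨m, hm'⟩ := rfl
    omega

lemma seq_ext {f g : ColoredSeq r n} (hv : f.val = g.val) (hc : f.col = g.col) :
    f = g := by
  cases f; cases g; simp_all

lemma toSeq_dOf (hr : 0 < r) (O : PDOrder r n) (η : ColoredPerm r n) {f : ColoredSeq r n}
    (hs : isSorted O.lt f η) : toSeq hr O η (dOf O η f) = f := by
  apply seq_ext
  · funext i
    show Mn O η (dOf O η f) (η.perm⁻¹ i : Fin n).val = f.val i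
    rw [Mn_dOf hr O η hs, Mf, Equiv.Perm.coe_inv, Equiv.apply_symm_apply]
  · funext i
    show (η.color (η.perm⁻¹ i) : ℕ) = f.col i
    rw [hs.1 (η.perm⁻¹ i), Equiv.Perm.coe_inv, Equiv.apply_symm_apply]

lemma dOf_toSeq (hr : 0 < r) (O : PDOrder r n) (η : ColoredPerm r n) (d : Fin n → ℕ) :
    dOf O η (toSeq hr O η d) = d := by
  funext k
  have hMf : ∀ k : Fin n, Mf η (toSeq hr O η d) k = Mn O η d k.val := fun k => by
    rw [Mf, toSeq_val]
  rw [dOf, hMf]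
  rcases Nat.eq_zero_or_pos k.val with h0 | h1
  · rw [Mprev, dif_pos h0, h0, Mn, Finset.sum_range_one, Dn, dif_pos (by omega)]
    have : (⟨0, by omega⟩ : Fin n) = k := Fin.ext h0.symm
    rw [this]
    omega
  · have hrec : Mn O η d k.val = Mn O η d (k.val - 1) + Dn O η d k.val := by
      rw [Mn, Mn, show k.val - 1 + 1 = k.val by omega, ← Finset.sum_range_succ]
    rw [Mprev, dif_neg (by omega), hMf]
    show Mn O η d k.val - Mn O η d (k.val - 1) - eD O η k.val = d k
    rw [hrec, Dn, dif_pos k.isLt, Fin.eta]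
    omega

end Stmt2Aux
namespace Stmt2Aux

open MvPowerSeries

variable {r n : ℕ}

/-- The sorting bijection. -/
noncomputable def E (hr : 0 < r) (O : PDOrder r n) (η : ColoredPerm r n) :
    (Fin n → ℕ) ≃ {f : ColoredSeq r n // isSorted O.lt f η} where
  toFun d := ⟨toSeq hr O η d, toSeq_sorted hr O η d⟩
  invFun f := dOf O η f.1
  left_inv d := dOf_toSeq hr O η d
  right_inv f := Subtype.ext (toSeq_dOf hr O η f.2)

/-- The monomial exponent `(a, b)`. -/
noncomputable def mon (a b : ℕ) : Fin 2 →₀ ℕ := Finsupp.single 0 a + Finsupp.single 1 b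

lemma mon_apply0 (a b : ℕ) : mon a b 0 = a := by
  simp [mon, Finsupp.single_apply]

lemma mon_apply1 (a b : ℕ) : mon a b 1 = b := by
  simp [mon, Finsupp.single_apply]

lemma finsupp2_eq_iff {μ ν : Fin 2 →₀ ℕ} : μ = ν ↔ μ 0 = ν 0 ∧ μ 1 = ν 1 := by
  constructor
  · rintro rfl; exact ⟨rfl, rfl⟩
  · rintro ⟨h0, h1⟩
    exact Finsupp.ext (Fin.forall_fin_two.mpr ⟨h0, h1⟩)

lemma finsupp2_eq_zero_iff {μ : Fin 2 →₀ ℕ} : μ = 0 ↔ μ 0 = 0 ∧ μ 1 = 0 := by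
  rw [finsupp2_eq_iff]; simp

lemma finsupp2_le_iff {μ ν : Fin 2 →₀ ℕ} : μ ≤ ν ↔ μ 0 ≤ ν 0 ∧ μ 1 ≤ ν 1 := by
  rw [Finsupp.le_def]
  exact Fin.forall_fin_two

/-- Geometric series `∑_{c ≥ 0} (t q^j)^c`. -/
noncomputable def Tg (j : ℕ) : MvPowerSeries (Fin 2) ℤ :=
  fun μ => if (μ 1 : ℕ) = j * μ 0 then 1 else 0

lemma coeff_Tg (j : ℕ) (μ : Fin 2 →₀ ℕ) :
    MvPowerSeries.coeff μ (Tg j) = if (μ 1 : ℕ) = j * μ 0 then 1 else 0 := rfl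

lemma Y_eq (j : ℕ) :
    (MvPowerSeries.X 0 : MvPowerSeries (Fin 2) ℤ) * MvPowerSeries.X 1 ^ j =
      MvPowerSeries.monomial (mon 1 j) 1 := by
  rw [X_pow_eq, MvPowerSeries.X, monomial_mul_monomial, one_mul, mon]

lemma Tg_inv (j : ℕ) :
    Tg j * (1 - (MvPowerSeries.X 0 : MvPowerSeries (Fin 2) ℤ) * MvPowerSeries.X 1 ^ j)
      = 1 := by
  rw [Y_eq, mul_sub, mul_one]
  ext μ
  rw [map_sub, coeff_mul_monomial, MvPowerSeries.coeff_one, coeff_Tg]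
  by_cases hm : mon 1 j ≤ μ
  · rw [if_pos hm, mul_one, coeff_Tg]
    obtain ⟨h1, hj⟩ := finsupp2_le_iff.mp hm
    rw [mon_apply0] at h1
    rw [mon_apply1] at hj
    rw [Finsupp.tsub_apply, Finsupp.tsub_apply, mon_apply0, mon_apply1]
    have hne : ¬ μ = 0 := by
      rw [finsupp2_eq_zero_iff]
      omega
    rw [if_neg hne]
    by_cases hd : (μ 1 : ℕ) = j * μ 0
    · rw [if_pos hd]
      obtain ⟨a, ha⟩ : ∃ a, μ 0 = a + 1 := ⟨μ 0 - 1, by omega⟩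
      have : μ 1 - j = j * (μ 0 - 1) := by
        rw [hd, ha, Nat.mul_succ, Nat.add_sub_cancel, Nat.add_sub_cancel]
      rw [if_pos this]
      ring
    · rw [if_neg hd]
      have hd2 : ¬ (μ 1 - j = j * (μ 0 - 1)) := by
        intro hc
        apply hd
        obtain ⟨a, ha⟩ : ∃ a, μ 0 = a + 1 := ⟨μ 0 - 1, by omega⟩
        rw [ha, Nat.mul_succ]
        rw [ha, Nat.add_sub_cancel] at hc
        omega
      rw [if_neg hd2]
      ring
  · rw [if_neg hm, sub_zero]
    rw [finsupp2_le_iff, mon_apply0, mon_apply1] at hm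
    push_neg at hm
    by_cases h0 : μ = 0
    · rw [if_pos h0, if_pos]
      rw [finsupp2_eq_zero_iff] at h0
      simp [h0.1, h0.2]
    · rw [if_neg h0]
      rw [finsupp2_eq_zero_iff] at h0
      have : ¬ (μ 1 : ℕ) = j * μ 0 := by
        intro hc
        rcases Nat.eq_zero_or_pos (μ 0) with hz | hp
        · rw [hz, Nat.mul_zero] at hc
          exact h0 ⟨hz, hc⟩
        · have hj' : j ≤ μ 1 := by
            rw [hc]
            calc j = j * 1 := (Nat.mul_one j).symm
            _ ≤ j * μ 0 := Nat.mul_le_mul_left j hp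
          have h1' : 1 ≤ μ 0 := hp
          exact absurd h1' (by omega)
      rw [if_neg this]

end Stmt2Aux
namespace Stmt2Aux

open MvPowerSeries Finset

variable {r : ℕ}

noncomputable def lOf (n : ℕ) (d : Fin n → ℕ) : ℕ →₀ (Fin 2 →₀ ℕ) :=
  Finsupp.onFinset (range n)
    (fun j => if h : j < n then mon (d ⟨j, h⟩) (j * d ⟨j, h⟩) else 0)
    (fun j hj => by rw [mem_range]; by_contra h; exact hj (dif_neg h))

lemma lOf_apply (n : ℕ) (d : Fin n → ℕ) (j : ℕ) :
    lOf n d j = if h : j < n then mon (d ⟨j, h⟩) (j * d ⟨j, h⟩) else 0 := rfl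

def dOfl (n : ℕ) (l : ℕ →₀ (Fin 2 →₀ ℕ)) : Fin n → ℕ := fun p => (l p.val) 0

lemma lOf_mem (n : ℕ) (μ : Fin 2 →₀ ℕ) (d : Fin n → ℕ)
    (h0 : (∑ p, d p) = μ 0) (h1 : (∑ p : Fin n, (p : ℕ) * d p) = μ 1) :
    lOf n d ∈ (finsuppAntidiag (range n) μ).filter
      (fun l => ∀ i ∈ range n, ((l i) 1 : ℕ) = i * (l i) 0) := by
  rw [mem_filter, mem_finsuppAntidiag]
  refine ⟨⟨?_, Finsupp.support_onFinset_subset⟩, ?_⟩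
  · rw [finsupp2_eq_iff]
    constructor
    · rw [Finsupp.finset_sum_apply]
      have he : ∀ j ∈ range n, (lOf n d j) 0 = (if h : j < n then d ⟨j, h⟩ else 0) := by
        intro j hj
        rw [lOf_apply, dif_pos (mem_range.mp hj), mon_apply0, dif_pos (mem_range.mp hj)]
      rw [Finset.sum_congr rfl he, ← h0,
        ← Fin.sum_univ_eq_sum_range (fun j => if h : j < n then d ⟨j, h⟩ else 0) n]
      exact Finset.sum_congr rfl fun p _ => by rw [dif_pos p.isLt, Fin.eta]
    · rw [Finsupp.finset_sum_apply]
      have he : ∀ j ∈ range n, (lOf n d j) 1 = (if h : j < n then j * d ⟨j, h⟩ else 0) := by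
        intro j hj
        rw [lOf_apply, dif_pos (mem_range.mp hj), mon_apply1, dif_pos (mem_range.mp hj)]
      rw [Finset.sum_congr rfl he, ← h1,
        ← Fin.sum_univ_eq_sum_range (fun j => if h : j < n then j * d ⟨j, h⟩ else 0) n]
      exact Finset.sum_congr rfl fun p _ => by rw [dif_pos p.isLt, Fin.eta]
  · intro i hi
    rw [lOf_apply, dif_pos (mem_range.mp hi), mon_apply0, mon_apply1]

lemma dOfl_prop (n : ℕ) (μ : Fin 2 →₀ ℕ) (l : ℕ →₀ (Fin 2 →₀ ℕ))
    (hl : l ∈ (finsuppAntidiag (range n) μ).filter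
      (fun l => ∀ i ∈ range n, ((l i) 1 : ℕ) = i * (l i) 0)) :
    (∑ p, dOfl n l p) = μ 0 ∧ (∑ p : Fin n, (p : ℕ) * dOfl n l p) = μ 1 := by
  rw [mem_filter, mem_finsuppAntidiag] at hl
  constructor
  · have hsum := congrArg (fun ν : Fin 2 →₀ ℕ => ν 0) hl.1.1
    rw [Finsupp.finset_sum_apply] at hsum
    simp only [dOfl]
    rw [Fin.sum_univ_eq_sum_range (fun j => (l j) 0) n]
    exact hsum
  · have hsum := congrArg (fun ν : Fin 2 →₀ ℕ => ν 1) hl.1.1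
    rw [Finsupp.finset_sum_apply] at hsum
    simp only [dOfl]
    rw [Fin.sum_univ_eq_sum_range (fun j => j * (l j) 0) n, ← hsum]
    exact Finset.sum_congr rfl fun j hj => (hl.2 j hj).symm

noncomputable def antiEquiv (n : ℕ) (μ : Fin 2 →₀ ℕ) :
    {l : ℕ →₀ (Fin 2 →₀ ℕ) // l ∈ (finsuppAntidiag (range n) μ).filter
        (fun l => ∀ i ∈ range n, ((l i) 1 : ℕ) = i * (l i) 0)} ≃
      {d : Fin n → ℕ // (∑ p, d p) = μ 0 ∧ (∑ p : Fin n, (p : ℕ) * d p) = μ 1} where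
  toFun l := ⟨dOfl n l.1, dOfl_prop n μ l.1 l.2⟩
  invFun d := ⟨lOf n d.1, lOf_mem n μ d.1 d.2.1 d.2.2⟩
  left_inv l := by
    apply Subtype.ext
    apply Finsupp.ext
    intro j
    show lOf n (dOfl n l.1) j = l.1 j
    rw [lOf_apply]
    by_cases h : j < n
    · rw [dif_pos h]
      have hl := l.2
      rw [mem_filter] at hl
      have hcond := hl.2 j (mem_range.mpr h)
      rw [finsupp2_eq_iff]
      exact ⟨(mon_apply0 _ _).trans rfl, by rw [mon_apply1]; exact (hcond.symm : _)⟩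
    · rw [dif_neg h]
      have hl := l.2
      rw [mem_filter, mem_finsuppAntidiag] at hl
      by_contra hne
      exact h (mem_range.mp (hl.1.2 (Finsupp.mem_support_iff.mpr (Ne.symm hne))))
  right_inv d := by
    apply Subtype.ext
    funext p
    show (lOf n d.1 p.val) 0 = d.1 p
    rw [lOf_apply, dif_pos p.isLt, mon_apply0, Fin.eta]

lemma coeff_prod_Tg (n : ℕ) (μ : Fin 2 →₀ ℕ) :
    MvPowerSeries.coeff μ (∏ j ∈ range n, Tg j) =
      (Nat.card {d : Fin n → ℕ //
        (∑ p, d p) = μ 0 ∧ (∑ p : Fin n, (p : ℕ) * d p) = μ 1} : ℤ) := by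
  rw [MvPowerSeries.coeff_prod]
  have h1 : ∀ l : ℕ →₀ (Fin 2 →₀ ℕ),
      (∏ i ∈ range n, MvPowerSeries.coeff (l i) (Tg i)) =
        if (∀ i ∈ range n, ((l i) 1 : ℕ) = i * (l i) 0) then (1 : ℤ) else 0 := by
    intro l
    simp only [coeff_Tg]
    rw [Finset.prod_boole]
  rw [Finset.sum_congr rfl fun l _ => h1 l, Finset.sum_boole]
  congr 1
  rw [← Nat.card_eq_finsetCard]
  exact Nat.card_congr (antiEquiv n μ)

end Stmt2Aux

namespace Stmt2Aux

open MvPowerSeries Finset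

variable {r n : ℕ}

lemma E_val (hr : 0 < r) (O : PDOrder r n) (η : ColoredPerm r n) (d : Fin n → ℕ) :
    ((E hr O η) d).1 = toSeq hr O η d := rfl

lemma card_eq (hr : 0 < r) (hn : 0 < n) (O : PDOrder r n) (η : ColoredPerm r n)
    (μ : Fin 2 →₀ ℕ) :
    Nat.card {f : ColoredSeq r n // isSorted O.lt f η ∧ maxf f = μ 0 ∧
        n * maxf f - sumf f = μ 1} =
    Nat.card {d : Fin n → ℕ // (∑ p, d p) + desStat O.lt η = μ 0 ∧
        (∑ p : Fin n, (p : ℕ) * d p) + majStat O.lt η = μ 1} := by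
  apply Nat.card_congr
  apply Equiv.symm
  refine Equiv.trans (Equiv.subtypeEquivRight ?_) (Equiv.trans
    (Equiv.subtypeEquiv (E hr O η) (fun d => Iff.rfl))
    (Equiv.subtypeSubtypeEquivSubtypeInter _ _))
  intro d
  rw [E_val hr O η d, stat2_toSeq hr hn O η d, maxf_toSeq hr hn O η d]

lemma lhs2_eq (hr : 0 < r) (hn : 0 < n) (O : PDOrder r n) (η : ColoredPerm r n) :
    lhs2 r n O η =
      (MvPowerSeries.monomial (mon (desStat O.lt η) (majStat O.lt η)) 1) *
        ∏ j ∈ range n, Tg j := by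
  ext μ
  rw [coeff_monomial_mul]
  have hL : MvPowerSeries.coeff μ (lhs2 r n O η) =
      (Nat.card {f : ColoredSeq r n // isSorted O.lt f η ∧ maxf f = μ 0 ∧
        n * maxf f - sumf f = μ 1} : ℤ) := rfl
  rw [hL, card_eq hr hn O η μ]
  by_cases hm : mon (desStat O.lt η) (majStat O.lt η) ≤ μ
  · rw [if_pos hm, one_mul, coeff_prod_Tg, Finsupp.tsub_apply, Finsupp.tsub_apply,
      mon_apply0, mon_apply1]
    obtain ⟨h1, h2⟩ := finsupp2_le_iff.mp hm
    rw [mon_apply0] at h1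
    rw [mon_apply1] at h2
    congr 1
    apply Nat.card_congr
    apply Equiv.subtypeEquivRight
    intro d
    constructor
    · rintro ⟨ha, hb⟩; omega
    · rintro ⟨ha, hb⟩; omega
  · rw [if_neg hm]
    rw [finsupp2_le_iff, mon_apply0, mon_apply1] at hm
    push_neg at hm
    have hE : IsEmpty {d : Fin n → ℕ // (∑ p, d p) + desStat O.lt η = μ 0 ∧
        (∑ p : Fin n, (p : ℕ) * d p) + majStat O.lt η = μ 1} := by
      refine ⟨fun d => ?_⟩
      obtain ⟨ha, hb⟩ := d.2
      rcases Nat.lt_or_ge (μ 0) (desStat O.lt η) with h | h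
      · omega
      · have := hm h
        omega
    rw [Nat.card_of_isEmpty]
    simp

end Stmt2Aux
theorem stmt2 (r n : ℕ) (hr : 0 < r) (hn : 0 < n) (O : PDOrder r n) (η : ColoredPerm r n) :
    (∀ M s : ℕ,
      {f : ColoredSeq r n | isSorted O.lt f η ∧ maxf f = M ∧ n * maxf f - sumf f = s}.Finite) ∧
    lhs2 r n O η *
        ∏ i ∈ Finset.range n,
          (1 - (MvPowerSeries.X 0 : MvPowerSeries (Fin 2) ℤ) * MvPowerSeries.X 1 ^ i) =
      (MvPowerSeries.X 0 : MvPowerSeries (Fin 2) ℤ) ^ desStat O.lt η *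
        MvPowerSeries.X 1 ^ majStat O.lt η := by
  constructor
  · intro M s
    have hsub : {f : ColoredSeq r n | isSorted O.lt f η ∧ maxf f = M ∧
        n * maxf f - sumf f = s} ⊆
        (fun d => Stmt2Aux.toSeq hr O η d) '' {d : Fin n → ℕ | ∀ p, d p ≤ M} := by
      intro f hf
      refine ⟨Stmt2Aux.dOf O η f, ?_, Stmt2Aux.toSeq_dOf hr O η hf.1⟩
      intro p
      have hmax := Stmt2Aux.maxf_toSeq hr hn O η (Stmt2Aux.dOf O η f)
      rw [Stmt2Aux.toSeq_dOf hr O η hf.1, hf.2.1] at hmax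
      have hs : Stmt2Aux.dOf O η f p ≤ ∑ q, Stmt2Aux.dOf O η f q :=
        Finset.single_le_sum (fun q _ => Nat.zero_le _) (Finset.mem_univ p)
      omega
    refine Set.Finite.subset (Set.Finite.image _ ?_) hsub
    have hpi : {d : Fin n → ℕ | ∀ p, d p ≤ M} ⊆
        Set.pi Set.univ (fun _ => Set.Iic M) := fun d hd => by
      intro p _
      exact hd p
    exact Set.Finite.subset (Set.Finite.pi fun _ => Set.finite_Iic M) hpi
  · rw [Stmt2Aux.lhs2_eq hr hn O η, mul_assoc, ← Finset.prod_mul_distrib]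
    have hone : ∀ j ∈ Finset.range n,
        Stmt2Aux.Tg j * (1 - (MvPowerSeries.X 0 : MvPowerSeries (Fin 2) ℤ) *
          MvPowerSeries.X 1 ^ j) = 1 := fun j _ => Stmt2Aux.Tg_inv j
    rw [Finset.prod_congr rfl hone, Finset.prod_const_one, mul_one,
      MvPowerSeries.X_pow_eq, MvPowerSeries.X_pow_eq,
      MvPowerSeries.monomial_mul_monomial, one_mul]
    rfl
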